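/- arXiv:2312.01512 — 2 statements merged into one kernel-verified Lean document; each statement's English description precedes it below -/
import Mathlib

section
/- The lattice generated by (√3, 0) and (√3/2, 3/2) is a covering lattice for the Euclidean unit disk D_2, and the resulting covering density, det(Λ) being 3√3/2, equals area(D_2)/det(Λ) = 2π/(3√3). -/
open Real MeasureTheory
set_option maxHeartbeats 1000000

lemma vol_disk : volume {q : ℝ × ℝ | q.1 ^ 2 + q.2 ^ 2 ≤ 1} = ENNReal.ofReal π := by
  have hD : MeasurableSet {q : ℝ × ℝ | q.1 ^ 2 + q.2 ^ 2 ≤ 1} := by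
    apply measurableSet_le <;> fun_prop
  have hpre : Complex.measurableEquivRealProd ⁻¹' {q : ℝ × ℝ | q.1 ^ 2 + q.2 ^ 2 ≤ 1}
      = Metric.closedBall (0 : ℂ) 1 := by
    ext z
    simp only [Set.mem_preimage, Set.mem_setOf_eq, Metric.mem_closedBall, dist_zero_right,
      Complex.measurableEquivRealProd_apply]
    have h1 : z.re ^ 2 + z.im ^ 2 = ‖z‖ ^ 2 := by
      rw [Complex.sq_norm, Complex.normSq_apply]; ring
    rw [h1]
    constructor
    · intro h
      nlinarith [norm_nonneg z]
    · intro h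
      nlinarith [norm_nonneg z]
  rw [← Complex.volume_preserving_equiv_real_prod.measure_preimage hD.nullMeasurableSet,
    hpre, Complex.volume_closedBall]
  rw [← NNReal.coe_real_pi, ENNReal.ofReal_coe_nnreal]
  simp

set_option maxHeartbeats 1000000

lemma key_corner (a b : ℝ) (ha0 : 0 ≤ a) (ha : a ≤ Real.sqrt 3 / 2)
    (hb0 : 0 ≤ b) (hb : b ≤ 3 / 4) (h : 1 < a ^ 2 + b ^ 2) :
    (a - Real.sqrt 3 / 2) ^ 2 + (b - 3 / 2) ^ 2 ≤ 1 := by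
  have hs : Real.sqrt 3 ^ 2 = 3 := Real.sq_sqrt (by norm_num)
  have hb2 : (1:ℝ) / 2 ≤ b := by nlinarith
  nlinarith [mul_nonneg ha0 (by linarith : 0 ≤ Real.sqrt 3 - 2 * a),
    mul_nonneg (by linarith : (0:ℝ) ≤ 2 * b - 1) (by linarith : (0:ℝ) ≤ 1 - b)]

theorem cover (x y : ℝ) :
    ∃ v ∈ AddSubgroup.closure {((Real.sqrt 3, 0) : ℝ × ℝ), (Real.sqrt 3 / 2, 3 / 2)},
      ((x, y) : ℝ × ℝ) - v ∈ {q : ℝ × ℝ | q.1 ^ 2 + q.2 ^ 2 ≤ 1} := by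
  set Λ := AddSubgroup.closure {((Real.sqrt 3, 0) : ℝ × ℝ), (Real.sqrt 3 / 2, 3 / 2)} with hΛ
  have hg1 : ((Real.sqrt 3, 0) : ℝ × ℝ) ∈ Λ := AddSubgroup.subset_closure (by simp)
  have hg2 : ((Real.sqrt 3 / 2, 3 / 2) : ℝ × ℝ) ∈ Λ := AddSubgroup.subset_closure (by simp)
  have hmem : ∀ k l : ℤ, (((k : ℝ) * Real.sqrt 3 + (l : ℝ) * (Real.sqrt 3 / 2),
      (l : ℝ) * (3 / 2)) : ℝ × ℝ) ∈ Λ := by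
    intro k l
    have h := AddSubgroup.add_mem Λ (AddSubgroup.zsmul_mem Λ hg1 k) (AddSubgroup.zsmul_mem Λ hg2 l)
    have e : k • ((Real.sqrt 3, 0) : ℝ × ℝ) + l • ((Real.sqrt 3 / 2, 3 / 2) : ℝ × ℝ)
        = ((k : ℝ) * Real.sqrt 3 + (l : ℝ) * (Real.sqrt 3 / 2), (l : ℝ) * (3 / 2)) := by
      simp [Prod.ext_iff, zsmul_eq_mul]
    rwa [e] at h
  have hs3 : (0:ℝ) < Real.sqrt 3 := Real.sqrt_pos.mpr (by norm_num)
  have hsq : Real.sqrt 3 ^ 2 = 3 := Real.sq_sqrt (by norm_num)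
  set n : ℤ := round (2 * y / 3) with hn
  set m : ℤ := round ((x - (n : ℝ) * (Real.sqrt 3 / 2)) / Real.sqrt 3) with hm
  set a : ℝ := x - (n : ℝ) * (Real.sqrt 3 / 2) - (m : ℝ) * Real.sqrt 3 with ha
  set c : ℝ := y - (n : ℝ) * (3 / 2) with hc
  have hcb : |c| ≤ 3 / 4 := by
    have h1 : |2 * y / 3 - (n : ℝ)| ≤ 1 / 2 := abs_sub_round _
    have h2 : c = (3 / 2) * (2 * y / 3 - (n : ℝ)) := by rw [hc]; ring
    rw [h2, abs_mul]
    rw [abs_of_nonneg (by norm_num : (0:ℝ) ≤ 3/2)]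
    linarith
  have hab : |a| ≤ Real.sqrt 3 / 2 := by
    have h1 : |(x - (n : ℝ) * (Real.sqrt 3 / 2)) / Real.sqrt 3 - (m : ℝ)| ≤ 1 / 2 :=
      abs_sub_round _
    have h2 : a = Real.sqrt 3 * ((x - (n : ℝ) * (Real.sqrt 3 / 2)) / Real.sqrt 3 - (m : ℝ)) := by
      rw [ha]; field_simp
    rw [h2, abs_mul, abs_of_nonneg hs3.le]
    nlinarith
  have hc1 : c ≤ 3 / 4 := (abs_le.mp hcb).2
  have hc2 : -(3 / 4) ≤ c := (abs_le.mp hcb).1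
  have ha1 : a ≤ Real.sqrt 3 / 2 := (abs_le.mp hab).2
  have ha2 : -(Real.sqrt 3 / 2) ≤ a := (abs_le.mp hab).1
  by_cases hd : a ^ 2 + c ^ 2 ≤ 1
  · refine ⟨_, hmem m n, ?_⟩
    simp only [Set.mem_setOf_eq, Prod.fst_sub, Prod.snd_sub]
    have e1 : x - ((m : ℝ) * Real.sqrt 3 + (n : ℝ) * (Real.sqrt 3 / 2)) = a := by rw [ha]; ring
    have e2 : y - (n : ℝ) * (3 / 2) = c := by rw [hc]
    rw [e1, e2]; exact hd
  · push_neg at hd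
    rcases le_or_gt 0 a with hA | hA <;> rcases le_or_gt 0 c with hC | hC
    · refine ⟨_, hmem m (n + 1), ?_⟩
      simp only [Set.mem_setOf_eq, Prod.fst_sub, Prod.snd_sub]
      have e1 : x - ((m : ℝ) * Real.sqrt 3 + ((n : ℤ) + 1 : ℤ) * (Real.sqrt 3 / 2))
          = a - Real.sqrt 3 / 2 := by push_cast; rw [ha]; ring
      have e2 : y - (((n : ℤ) + 1 : ℤ) : ℝ) * (3 / 2) = c - 3 / 2 := by
        push_cast; rw [hc]; ring
      rw [e1, e2]
      exact key_corner a c hA ha1 hC hc1 hd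
    · refine ⟨_, hmem (m + 1) (n - 1), ?_⟩
      simp only [Set.mem_setOf_eq, Prod.fst_sub, Prod.snd_sub]
      have e1 : x - ((((m : ℤ) + 1 : ℤ) : ℝ) * Real.sqrt 3 + (((n : ℤ) - 1 : ℤ) : ℝ) * (Real.sqrt 3 / 2))
          = a - Real.sqrt 3 / 2 := by push_cast; rw [ha]; ring
      have e2 : y - (((n : ℤ) - 1 : ℤ) : ℝ) * (3 / 2) = c + 3 / 2 := by push_cast; rw [hc]; ring
      rw [e1, e2]
      have hk := key_corner a (-c) hA ha1 (by linarith) (by linarith) (by nlinarith)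
      have hq : (c + 3 / 2) ^ 2 = (-c - 3 / 2) ^ 2 := by ring
      linarith
    · refine ⟨_, hmem (m - 1) (n + 1), ?_⟩
      simp only [Set.mem_setOf_eq, Prod.fst_sub, Prod.snd_sub]
      have e1 : x - ((((m : ℤ) - 1 : ℤ) : ℝ) * Real.sqrt 3 + (((n : ℤ) + 1 : ℤ) : ℝ) * (Real.sqrt 3 / 2))
          = a + Real.sqrt 3 / 2 := by push_cast; rw [ha]; ring
      have e2 : y - (((n : ℤ) + 1 : ℤ) : ℝ) * (3 / 2) = c - 3 / 2 := by push_cast; rw [hc]; ring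
      rw [e1, e2]
      have hk := key_corner (-a) c (by linarith) (by linarith) hC hc1 (by nlinarith)
      have hq : (a + Real.sqrt 3 / 2) ^ 2 = (-a - Real.sqrt 3 / 2) ^ 2 := by ring
      linarith
    · refine ⟨_, hmem m (n - 1), ?_⟩
      simp only [Set.mem_setOf_eq, Prod.fst_sub, Prod.snd_sub]
      have e1 : x - (((m : ℤ) : ℝ) * Real.sqrt 3 + (((n : ℤ) - 1 : ℤ) : ℝ) * (Real.sqrt 3 / 2))
          = a + Real.sqrt 3 / 2 := by push_cast; rw [ha]; ring
      have e2 : y - (((n : ℤ) - 1 : ℤ) : ℝ) * (3 / 2) = c + 3 / 2 := by push_cast; rw [hc]; ring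
      rw [e1, e2]
      have hk := key_corner (-a) (-c) (by linarith) (by linarith) (by linarith) (by linarith)
        (by nlinarith)
      have hq : (a + Real.sqrt 3 / 2) ^ 2 = (-a - Real.sqrt 3 / 2) ^ 2 := by ring
      have hq2 : (c + 3 / 2) ^ 2 = (-c - 3 / 2) ^ 2 := by ring
      linarith


theorem D2_covering_lattice :
    let Λ : AddSubgroup (ℝ × ℝ) :=
      AddSubgroup.closure {((Real.sqrt 3, 0) : ℝ × ℝ), (Real.sqrt 3 / 2, 3 / 2)}
    let D : Set (ℝ × ℝ) := {q | q.1 ^ 2 + q.2 ^ 2 ≤ 1}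
    (∀ z : ℝ × ℝ, ∃ v ∈ Λ, z - v ∈ D) ∧
    |Real.sqrt 3 * (3 / 2) - 0 * (Real.sqrt 3 / 2)| = 3 * Real.sqrt 3 / 2 ∧
    volume D = ENNReal.ofReal π ∧
    π / (3 * Real.sqrt 3 / 2) = 2 * π / (3 * Real.sqrt 3) := by
  intro Λ D
  refine ⟨fun z => cover z.1 z.2, ?_, vol_disk, ?_⟩
  · rw [zero_mul, sub_zero, abs_of_nonneg (by positivity : (0:ℝ) ≤ Real.sqrt 3 * (3/2))]
    ring
  · have h3 : Real.sqrt 3 ≠ 0 := by positivity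
    field_simp
end

section
/- The Davis constant p₀, defined as a solution of Δ(p,σ_p) = Δ(p,1) in the stated form (1/2)(2^p-1)^{1/p} = 4^{-1/p}(1+τ_p)/(1-τ_p) where τ_p is the root of 2(1-τ)^p = 1+τ^p in [0,1), exists in the interval (2.57, 2.58). -/
open Real

noncomputable def davisK (p : ℝ) : ℝ :=
  (4 : ℝ) ^ (1 / p) * ((1 / 2) * ((2 : ℝ) ^ p - 1) ^ (1 / p))

noncomputable def davisT (p : ℝ) : ℝ := (davisK p - 1) / (davisK p + 1)

noncomputable def davisH (p : ℝ) : ℝ :=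
  2 * (1 - davisT p) ^ p - (1 + davisT p ^ p)

lemma davis_rpow_le_of_pow_le {a c : ℝ} {n d : ℕ} (hd : d ≠ 0) (ha : 0 ≤ a) (hc : 0 ≤ c)
    (h : a ^ n ≤ c ^ d) : a ^ ((n : ℝ) / (d : ℝ)) ≤ c := by
  have hd' : (d : ℝ) ≠ 0 := Nat.cast_ne_zero.mpr hd
  have key : (a ^ ((n : ℝ) / (d : ℝ))) ^ d = a ^ n := by
    rw [← Real.rpow_natCast (a ^ ((n : ℝ) / (d : ℝ))) d, ← Real.rpow_mul ha,
      div_mul_cancel₀ _ hd', Real.rpow_natCast]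
  have h2 : (a ^ ((n : ℝ) / (d : ℝ))) ^ d ≤ c ^ d := by rw [key]; exact h
  exact (pow_le_pow_iff_left₀ (Real.rpow_nonneg ha _) hc hd).mp h2

lemma davis_le_rpow_of_pow_le {a c : ℝ} {n d : ℕ} (hd : d ≠ 0) (ha : 0 ≤ a) (hc : 0 ≤ c)
    (h : c ^ d ≤ a ^ n) : c ≤ a ^ ((n : ℝ) / (d : ℝ)) := by
  have hd' : (d : ℝ) ≠ 0 := Nat.cast_ne_zero.mpr hd
  have key : (a ^ ((n : ℝ) / (d : ℝ))) ^ d = a ^ n := by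
    rw [← Real.rpow_natCast (a ^ ((n : ℝ) / (d : ℝ))) d, ← Real.rpow_mul ha,
      div_mul_cancel₀ _ hd', Real.rpow_natCast]
  have h2 : c ^ d ≤ (a ^ ((n : ℝ) / (d : ℝ))) ^ d := by rw [key]; exact h
  exact (pow_le_pow_iff_left₀ hc (Real.rpow_nonneg ha _) hd).mp h2

lemma davis_two_rpow_gt {p : ℝ} (hp : 2 ≤ p) : (2 : ℝ) < (2 : ℝ) ^ p := by
  have h1 : (2 : ℝ) ^ (1 : ℝ) < (2 : ℝ) ^ p :=
    Real.rpow_lt_rpow_of_exponent_lt one_lt_two (by linarith)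
  rwa [Real.rpow_one] at h1

lemma davisK_eq {p : ℝ} (hp : 2 ≤ p) :
    davisK p = (1 / 2) * ((4 * ((2 : ℝ) ^ p - 1)) ^ (1 / p)) := by
  have h1 : (0 : ℝ) ≤ (2 : ℝ) ^ p - 1 := by
    have := davis_two_rpow_gt hp; linarith
  rw [davisK, Real.mul_rpow (by norm_num) h1]; ring

lemma davisK_gt_one {p : ℝ} (hp : 2 ≤ p) : 1 < davisK p := by
  have hp0 : (0 : ℝ) < p := by linarith
  have h2p := davis_two_rpow_gt hp
  have h1 : (0 : ℝ) ≤ (2 : ℝ) ^ p - 1 := by linarith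
  rw [davisK_eq hp]
  have h2 : (2 : ℝ) = ((2 : ℝ) ^ p) ^ (1 / p) := by
    rw [← Real.rpow_mul (by norm_num), mul_one_div, div_self hp0.ne', Real.rpow_one]
  have h3 : ((2 : ℝ) ^ p) ^ (1 / p) < (4 * ((2 : ℝ) ^ p - 1)) ^ (1 / p) :=
    Real.rpow_lt_rpow (by positivity) (by linarith) (by positivity)
  rw [← h2] at h3
  linarith

lemma davisT_mem {p : ℝ} (hp : 2 ≤ p) : davisT p ∈ Set.Ioo (0 : ℝ) 1 := by
  have hK := davisK_gt_one hp
  constructor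
  · apply div_pos <;> linarith
  · rw [davisT, div_lt_one (by linarith)]; linarith

lemma davis_contH : ContinuousOn davisH (Set.Icc (2.57 : ℝ) 2.58) := by
  have hmem : ∀ p ∈ Set.Icc (2.57 : ℝ) 2.58, (2 : ℝ) ≤ p := by
    intro p hp; have := hp.1; norm_num at this ⊢; linarith
  have c1 : ContinuousOn (fun p : ℝ => 1 / p) (Set.Icc (2.57 : ℝ) 2.58) := by
    apply continuousOn_const.div continuousOn_id
    intro p hp; have := hmem p hp; positivity
  have c2 : ContinuousOn (fun p : ℝ => (2 : ℝ) ^ p) (Set.Icc (2.57 : ℝ) 2.58) :=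
    continuousOn_const.rpow continuousOn_id fun p _ => Or.inl (by norm_num)
  have c3 : ContinuousOn (fun p : ℝ => ((2 : ℝ) ^ p - 1) ^ (1 / p))
      (Set.Icc (2.57 : ℝ) 2.58) := by
    apply (c2.sub continuousOn_const).rpow c1
    intro p hp
    exact Or.inl (by have := davis_two_rpow_gt (hmem p hp); simp; linarith)
  have c4 : ContinuousOn (fun p : ℝ => (4 : ℝ) ^ (1 / p)) (Set.Icc (2.57 : ℝ) 2.58) :=
    continuousOn_const.rpow c1 fun p _ => Or.inl (by norm_num)
  have cK : ContinuousOn davisK (Set.Icc (2.57 : ℝ) 2.58) :=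
    c4.mul (continuousOn_const.mul c3)
  have cT : ContinuousOn davisT (Set.Icc (2.57 : ℝ) 2.58) := by
    apply (cK.sub continuousOn_const).div (cK.add continuousOn_const)
    intro p hp
    have := davisK_gt_one (hmem p hp); intro h; have h' : davisK p + 1 = 0 := h; linarith [h']
  have cH1 : ContinuousOn (fun p : ℝ => (1 - davisT p) ^ p) (Set.Icc (2.57 : ℝ) 2.58) := by
    apply (continuousOn_const.sub cT).rpow continuousOn_id
    intro p hp
    have := davisT_mem (hmem p hp)
    have h2 := this.2
    exact Or.inl (by intro h; have h' : 1 - davisT p = 0 := h; linarith)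
  have cH2 : ContinuousOn (fun p : ℝ => davisT p ^ p) (Set.Icc (2.57 : ℝ) 2.58) := by
    apply cT.rpow continuousOn_id
    intro p hp
    have := davisT_mem (hmem p hp)
    exact Or.inl (ne_of_gt this.1)
  exact (continuousOn_const.mul cH1).sub (continuousOn_const.add cH2)

lemma davisH_pos : 0 < davisH 2.57 := by
  have hp : (2.57 : ℝ) = ((257 : ℕ) : ℝ) / ((100 : ℕ) : ℝ) := by norm_num
  have hip : 1 / (2.57 : ℝ) = ((100 : ℕ) : ℝ) / ((257 : ℕ) : ℝ) := by norm_num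
  have hp2 : (2 : ℝ) ≤ 2.57 := by norm_num
  have hA0 : (2 : ℝ) < (2 : ℝ) ^ (2.57 : ℝ) := davis_two_rpow_gt hp2
  have hA : (2 : ℝ) ^ (2.57 : ℝ) ≤ 593809429 / 100000000 := by
    rw [hp]
    exact davis_rpow_le_of_pow_le (by norm_num) (by norm_num) (by norm_num) (by rw [show (257:ℕ) = 128 + 129 from rfl, pow_add]; norm_num)
  have hX : (4 : ℝ) * ((2 : ℝ) ^ (2.57 : ℝ) - 1) ≤ 493809429 / 25000000 := by linarith
  have hX0 : (0 : ℝ) ≤ (4 : ℝ) * ((2 : ℝ) ^ (2.57 : ℝ) - 1) := by linarith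
  have hB : ((4 : ℝ) * ((2 : ℝ) ^ (2.57 : ℝ) - 1)) ^ (1 / (2.57 : ℝ)) ≤ 159625421 / 50000000 := by
    rw [hip]
    calc ((4 : ℝ) * ((2 : ℝ) ^ (2.57 : ℝ) - 1)) ^ (((100 : ℕ) : ℝ) / ((257 : ℕ) : ℝ))
        ≤ ((493809429 / 25000000 : ℝ)) ^ (((100 : ℕ) : ℝ) / ((257 : ℕ) : ℝ)) :=
          Real.rpow_le_rpow hX0 hX (by positivity)
      _ ≤ _ := davis_rpow_le_of_pow_le (by norm_num) (by norm_num) (by norm_num) (by rw [show (257:ℕ) = 128 + 129 from rfl, pow_add]; norm_num)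
  have hKle : davisK 2.57 ≤ 159625421 / 100000000 := by
    rw [davisK_eq hp2]; linarith
  have hK1 := davisK_gt_one hp2
  have hτ : davisT 2.57 ≤ 59625421 / 259625421 := by
    rw [davisT, div_le_div_iff₀ (by linarith) (by norm_num)]
    nlinarith
  have hτ0 : 0 < davisT 2.57 := (davisT_mem hp2).1
  have hL : (51141651 / 100000000 : ℝ) ≤ (1 - davisT 2.57) ^ (2.57 : ℝ) := by
    calc (51141651 / 100000000 : ℝ)
        ≤ ((200000000 / 259625421 : ℝ)) ^ (((257 : ℕ) : ℝ) / ((100 : ℕ) : ℝ)) :=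
          davis_le_rpow_of_pow_le (by norm_num) (by norm_num) (by norm_num) (by rw [show (257:ℕ) = 128 + 129 from rfl, pow_add]; norm_num)
      _ ≤ _ := by
          rw [hp]
          exact Real.rpow_le_rpow (by norm_num) (by linarith) (by norm_num)
  have hU : (davisT 2.57) ^ (2.57 : ℝ) ≤ 142517 / 6250000 := by
    calc (davisT 2.57) ^ (2.57 : ℝ) ≤ ((59625421 / 259625421 : ℝ)) ^ (2.57 : ℝ) :=
        Real.rpow_le_rpow hτ0.le hτ (by norm_num)
      _ ≤ _ := by
          rw [hp]
          exact davis_rpow_le_of_pow_le (by norm_num) (by norm_num) (by norm_num) (by rw [show (257:ℕ) = 128 + 129 from rfl, pow_add]; norm_num)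
  rw [davisH]
  linarith

lemma davisH_neg : davisH 2.58 < 0 := by
  have hp : (2.58 : ℝ) = ((129 : ℕ) : ℝ) / ((50 : ℕ) : ℝ) := by norm_num
  have hip : 1 / (2.58 : ℝ) = ((50 : ℕ) : ℝ) / ((129 : ℕ) : ℝ) := by norm_num
  have hp2 : (2 : ℝ) ≤ 2.58 := by norm_num
  have hA0 : (2 : ℝ) < (2 : ℝ) ^ (2.58 : ℝ) := davis_two_rpow_gt hp2
  have hA : (597939699 / 100000000 : ℝ) ≤ (2 : ℝ) ^ (2.58 : ℝ) := by
    rw [hp]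
    exact davis_le_rpow_of_pow_le (by norm_num) (by norm_num) (by norm_num) (by norm_num)
  have hX : (497939699 / 25000000 : ℝ) ≤ (4 : ℝ) * ((2 : ℝ) ^ (2.58 : ℝ) - 1) := by linarith
  have hB : (318845383 / 100000000 : ℝ) ≤ ((4 : ℝ) * ((2 : ℝ) ^ (2.58 : ℝ) - 1)) ^ (1 / (2.58 : ℝ)) := by
    rw [hip]
    calc (318845383 / 100000000 : ℝ)
        ≤ ((497939699 / 25000000 : ℝ)) ^ (((50 : ℕ) : ℝ) / ((129 : ℕ) : ℝ)) :=
          davis_le_rpow_of_pow_le (by norm_num) (by norm_num) (by norm_num) (by norm_num)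
      _ ≤ _ := Real.rpow_le_rpow (by norm_num) hX (by positivity)
  have hKge : (318845383 / 200000000 : ℝ) ≤ davisK 2.58 := by
    rw [davisK_eq hp2]; linarith
  have hK1 := davisK_gt_one hp2
  have hτ : (118845383 / 518845383 : ℝ) ≤ davisT 2.58 := by
    rw [davisT, div_le_div_iff₀ (by norm_num) (by linarith)]
    nlinarith
  have hτ1 : davisT 2.58 < 1 := (davisT_mem hp2).2
  have hU : (1 - davisT 2.58) ^ (2.58 : ℝ) ≤ 51111291 / 100000000 := by
    calc (1 - davisT 2.58) ^ (2.58 : ℝ)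
        ≤ ((400000000 / 518845383 : ℝ)) ^ (2.58 : ℝ) :=
          Real.rpow_le_rpow (by linarith) (by linarith) (by norm_num)
      _ ≤ _ := by
          rw [hp]
          exact davis_rpow_le_of_pow_le (by norm_num) (by norm_num) (by norm_num) (by norm_num)
  have hL : (1115903 / 50000000 : ℝ) ≤ (davisT 2.58) ^ (2.58 : ℝ) := by
    calc (1115903 / 50000000 : ℝ)
        ≤ ((118845383 / 518845383 : ℝ)) ^ (((129 : ℕ) : ℝ) / ((50 : ℕ) : ℝ)) :=
          davis_le_rpow_of_pow_le (by norm_num) (by norm_num) (by norm_num) (by norm_num)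
      _ ≤ _ := by
          rw [← hp]
          exact Real.rpow_le_rpow (by norm_num) hτ (by norm_num)
  rw [davisH]
  linarith

lemma davis_exists_root : ∃ p₀ ∈ Set.Ioo (2.57 : ℝ) 2.58, davisH p₀ = 0 := by
  have h0 : (0 : ℝ) ∈ Set.Ioo (davisH 2.58) (davisH 2.57) := ⟨davisH_neg, davisH_pos⟩
  obtain ⟨p₀, hmem, heq⟩ := intermediate_value_Ioo' (by norm_num) davis_contH h0
  exact ⟨p₀, hmem, heq⟩

theorem davis_constant_exists :
    ∃ p₀ ∈ Set.Ioo (2.57 : ℝ) 2.58,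
      ∀ τ : ℝ, τ ∈ Set.Ico (0 : ℝ) 1 → 2 * (1 - τ) ^ p₀ = 1 + τ ^ p₀ →
        (1 / 2) * ((2 : ℝ) ^ p₀ - 1) ^ (1 / p₀) =
          (4 : ℝ) ^ (-(1 / p₀)) * (1 + τ) / (1 - τ) := by
  obtain ⟨p₀, hmem, hroot⟩ := davis_exists_root
  refine ⟨p₀, hmem, ?_⟩
  intro τ hτ hτeq
  have hp2 : (2 : ℝ) ≤ p₀ := by have := hmem.1; norm_num at this; linarith
  have hp0 : (0 : ℝ) < p₀ := by linarith
  have hT := davisT_mem hp2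
  have hroot2 : 2 * (1 - davisT p₀) ^ p₀ = 1 + davisT p₀ ^ p₀ := by
    rw [davisH] at hroot; linarith
  -- uniqueness of the root in [0,1)
  have hanti : ∀ a b : ℝ, 0 ≤ a → a < b → b < 1 →
      2 * (1 - b) ^ p₀ - (1 + b ^ p₀) < 2 * (1 - a) ^ p₀ - (1 + a ^ p₀) := by
    intro a b ha hab hb
    have h1 : (1 - b) ^ p₀ < (1 - a) ^ p₀ :=
      Real.rpow_lt_rpow (by linarith) (by linarith) hp0
    have h2 : a ^ p₀ ≤ b ^ p₀ := Real.rpow_le_rpow ha hab.le hp0.le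
    linarith
  have hτT : τ = davisT p₀ := by
    by_contra hne
    rcases lt_or_gt_of_ne hne with h | h
    · have := hanti τ (davisT p₀) hτ.1 h hT.2
      linarith
    · have := hanti (davisT p₀) τ hT.1.le h hτ.2
      linarith
  subst hτT
  -- final identity
  set K := davisK p₀ with hKdef
  have hK := davisK_gt_one hp2
  have hK1 : K + 1 ≠ 0 := by intro h; linarith
  have h4 : (0 : ℝ) < (4 : ℝ) ^ (1 / p₀) := Real.rpow_pos_of_pos (by norm_num) _
  have hτval : davisT p₀ = (K - 1) / (K + 1) := rfl
  rw [hτval, Real.rpow_neg (by norm_num : (0 : ℝ) ≤ 4)]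
  have hdiv : ((4 : ℝ) ^ (1 / p₀))⁻¹ * (1 + (K - 1) / (K + 1)) / (1 - (K - 1) / (K + 1)) =
      ((4 : ℝ) ^ (1 / p₀))⁻¹ * K := by
    field_simp
    ring
  rw [hdiv, hKdef, davisK, ← mul_assoc, inv_mul_cancel₀ h4.ne', one_mul]
end
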